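/- Let κ be a field and A a κ-algebra such that A ≠ 0, the structure map κ → A is not surjective, and the only κ-subalgebras of A are κ and A itself. Then A is isomorphic as a κ-algebra to exactly one of: (i) κ[ε]/(ε²), (ii) κ × κ, (iii) κ(a^{1/p}) where p = char κ > 0 and a ∈ κ \ κ^p, (iv) a finite nontrivial separable field extension of κ with no intermediate subextensions other than κ and itself. -/

import Mathlib

open Polynomial

section PrimeAlgebraClassification

variable (κ : Type*) [Field κ] (A : Type*) [CommRing A] [Algebra κ A]

/-- Case (i): `A ≅ κ[ε]/(ε²)`. -/
def IsDualNumberCase : Prop := Nonempty (A ≃ₐ[κ] DualNumber κ)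

/-- Case (ii): `A ≅ κ × κ`. -/
def IsProdCase : Prop := Nonempty (A ≃ₐ[κ] (κ × κ))

/-- Case (iii): `A ≅ κ(a^{1/p})` where `p = char κ > 0` and `a ∈ κ \ κ^p`. -/
def IsInsepCase : Prop :=
  ∃ p : ℕ, p.Prime ∧ CharP κ p ∧
    ∃ a : κ, a ∉ Set.range (fun x : κ => x ^ p) ∧
      Nonempty (A ≃ₐ[κ] AdjoinRoot (X ^ p - C a))

/-- Case (iv): `A` is a finite nontrivial separable field extension of `κ`
(having no intermediate subalgebras other than `κ` and `A`, which is part of the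
prime-algebra hypothesis). -/
def IsSepFieldCase : Prop :=
  IsField A ∧ Module.Finite κ A ∧ Algebra.IsSeparable κ A ∧
    ¬ Function.Surjective (algebraMap κ A)

variable {κ A}

open DualNumber

namespace PrimeAlgebraAux

theorem adjoin_eq_top (hsub : ∀ S : Subalgebra κ A, S = ⊥ ∨ S = ⊤)
    {x : A} (hx : x ∉ (⊥ : Subalgebra κ A)) : Algebra.adjoin κ {x} = ⊤ :=
  (hsub _).resolve_left fun h => hx (h ▸ Algebra.subset_adjoin (Set.mem_singleton x))

theorem unit_of_mem_bot [Nontrivial A] {x : A} (hx : x ∈ (⊥ : Subalgebra κ A)) (hx0 : x ≠ 0) :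
    IsUnit x := by
  obtain ⟨c, rfl⟩ := Algebra.mem_bot.mp hx
  have hc : c ≠ 0 := fun h => hx0 (by simp [h])
  exact (isUnit_iff_ne_zero.mpr hc).map (algebraMap κ A)

theorem nilpotent_not_mem_bot [Nontrivial A] {x : A} (hnil : IsNilpotent x) (hx0 : x ≠ 0) :
    x ∉ (⊥ : Subalgebra κ A) := by
  intro hx
  obtain ⟨k, hk⟩ := hnil
  have h := (unit_of_mem_bot hx hx0).pow k
  rw [hk] at h
  exact not_isUnit_zero h

theorem isIntegral (hnt : Nontrivial A)
    (hsub : ∀ S : Subalgebra κ A, S = ⊥ ∨ S = ⊤) : Algebra.IsIntegral κ A := by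
  rcases hsub (integralClosure κ A) with h | h
  · constructor
    intro x
    by_contra hx
    have hxb : x ∉ (⊥ : Subalgebra κ A) := fun hmem => hx (by rw [← h] at hmem; exact hmem)
    have hx2 : x ^ 2 ∉ (⊥ : Subalgebra κ A) := by
      intro hmem
      obtain ⟨c, hc⟩ := Algebra.mem_bot.mp hmem
      exact hx ⟨X ^ 2 - C c, monic_X_pow_sub_C c two_ne_zero, by simp [hc]⟩
    have htop := adjoin_eq_top hsub hx2
    have hxmem : x ∈ Algebra.adjoin κ {x ^ 2} := htop ▸ Algebra.mem_top
    rw [Algebra.adjoin_singleton_eq_range_aeval] at hxmem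
    obtain ⟨q, hq⟩ := hxmem
    have halg : IsAlgebraic κ x := by
      refine ⟨expand κ 2 q - X, ?_, ?_⟩
      · intro h0
        have h1 : (expand κ 2 q - X).coeff 1 = 0 := by rw [h0]; simp
        rw [coeff_sub, coeff_expand two_pos, coeff_X_one] at h1
        simp at h1
      · have hq' : aeval (x ^ 2) q = x := hq
        rw [map_sub, expand_aeval, aeval_X, hq', sub_self]
    exact hx halg.isIntegral
  · exact ⟨fun x => by
      have hmem : x ∈ integralClosure κ A := by rw [h]; exact Algebra.mem_top
      exact hmem⟩

theorem equiv_adjoinRoot {x : A}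
    (hint : IsIntegral κ x) (hadj : Algebra.adjoin κ {x} = ⊤) :
    Nonempty (A ≃ₐ[κ] AdjoinRoot (minpoly κ x)) := by
  have hsurj : Function.Surjective (AdjoinRoot.liftAlgHom (minpoly κ x) (Algebra.ofId κ A) x (minpoly.aeval κ x)) := by
    have hle : Algebra.adjoin κ {x} ≤
        (AdjoinRoot.liftAlgHom (minpoly κ x) (Algebra.ofId κ A) x (minpoly.aeval κ x)).range := by
      rw [Algebra.adjoin_le_iff]
      intro y hy
      rw [Set.mem_singleton_iff] at hy
      rw [hy]
      refine ⟨AdjoinRoot.root (minpoly κ x), ?_⟩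
      show AdjoinRoot.liftAlgHom (minpoly κ x) (Algebra.ofId κ A) x (minpoly.aeval κ x)
        (AdjoinRoot.root (minpoly κ x)) = x
      exact AdjoinRoot.liftAlgHom_root (minpoly κ x) (Algebra.ofId κ A) x (minpoly.aeval κ x)
    intro a
    exact hle (by rw [hadj]; exact Algebra.mem_top)
  have hinj : Function.Injective (AdjoinRoot.liftAlgHom (minpoly κ x) (Algebra.ofId κ A) x (minpoly.aeval κ x)) := by
    rw [injective_iff_map_eq_zero]
    intro z hz
    obtain ⟨p, rfl⟩ := AdjoinRoot.mk_surjective z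
    rw [AdjoinRoot.mk_eq_zero]
    apply minpoly.dvd
    exact hz
  exact ⟨(AlgEquiv.ofBijective _ ⟨hinj, hsurj⟩).symm⟩

theorem finrank_eq {x : A} (hint : IsIntegral κ x) (hadj : Algebra.adjoin κ {x} = ⊤) :
    Module.finrank κ A = (minpoly κ x).natDegree := by
  obtain ⟨e⟩ := equiv_adjoinRoot hint hadj
  rw [e.toLinearEquiv.finrank_eq, (AdjoinRoot.powerBasis' (minpoly.monic hint)).finrank,
    AdjoinRoot.powerBasis'_dim]

theorem two_le_minpoly [Nontrivial A] {x : A} (hint : IsIntegral κ x)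
    (hx : x ∉ (⊥ : Subalgebra κ A)) : 2 ≤ (minpoly κ x).natDegree := by
  by_contra h
  push_neg at h
  have h1 : (minpoly κ x).natDegree = 1 :=
    le_antisymm (by omega) (minpoly.natDegree_pos hint)
  have h2 := (minpoly.monic hint).eq_X_add_C h1
  have h3 := minpoly.aeval κ x
  rw [h2, map_add, aeval_X, aeval_C] at h3
  refine hx (Algebra.mem_bot.mpr ⟨-(minpoly κ x).coeff 0, ?_⟩)
  rw [map_neg, eq_comm, eq_neg_iff_add_eq_zero]
  exact h3

theorem monic_dvd_eq {p q : κ[X]} (hp : p.Monic) (hq : q.Monic) (hdvd : p ∣ q)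
    (hdeg : q.natDegree ≤ p.natDegree) : p = q := by
  obtain ⟨c, rfl⟩ := hdvd
  have hc0 : c ≠ 0 := by rintro rfl; rw [mul_zero] at hq; exact hq.ne_zero rfl
  have hnd : p.natDegree + c.natDegree ≤ p.natDegree := by
    rw [← natDegree_mul hp.ne_zero hc0]; exact hdeg
  have hcm : c.Monic := hp.of_mul_monic_left hq
  have hc1 : c = 1 := hcm.natDegree_eq_zero.mp (by omega)
  rw [hc1, mul_one]

theorem quad_equiv {f : κ[X]} (hf : f.Monic) (hdeg : f.natDegree = 2)
    {B : Type*} [CommRing B] [Algebra κ B] (b : B) (hb : aeval b f = 0)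
    (hgen : ∀ z : B, ∃ c d : κ, z = algebraMap κ B c + algebraMap κ B d * b)
    (hind : ∀ c d : κ, algebraMap κ B c + algebraMap κ B d * b = 0 → c = 0 ∧ d = 0) :
    Nonempty (AdjoinRoot f ≃ₐ[κ] B) := by
  let φ : AdjoinRoot f →ₐ[κ] B := AdjoinRoot.liftAlgHom f (Algebra.ofId κ B) b hb
  refine ⟨AlgEquiv.ofBijective φ ⟨?_, ?_⟩⟩
  · rw [injective_iff_map_eq_zero]
    intro z hz
    obtain ⟨p, rfl⟩ := AdjoinRoot.mk_surjective z
    have hrw : AdjoinRoot.mk f p = AdjoinRoot.mk f (p %ₘ f) := by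
      rw [AdjoinRoot.mk_eq_mk]
      exact ⟨p /ₘ f, by linear_combination -(modByMonic_add_div p f)⟩
    have hdr : (p %ₘ f).natDegree ≤ 1 := by
      have h1 := natDegree_modByMonic_lt p hf (fun h1 => by
        rw [h1, natDegree_one] at hdeg; omega)
      omega
    have hrX := eq_X_add_C_of_natDegree_le_one hdr
    rw [hrw] at hz ⊢
    have hev : φ (AdjoinRoot.mk f (p %ₘ f)) =
        algebraMap κ B ((p %ₘ f).coeff 0) + algebraMap κ B ((p %ₘ f).coeff 1) * b := by
      show AdjoinRoot.liftAlgHom f (Algebra.ofId κ B) b hb (AdjoinRoot.mk f (p %ₘ f)) = _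
      change aeval b (p %ₘ f) = _
      conv_lhs => rw [hrX]
      rw [map_add, map_mul, aeval_C, aeval_C, aeval_X]
      ring
    rw [hev] at hz
    obtain ⟨h0, h1⟩ := hind _ _ hz
    rw [hrX, h0, h1]
    simp
  · intro z
    obtain ⟨c, d, rfl⟩ := hgen z
    refine ⟨AdjoinRoot.mk f (C c + C d * X), ?_⟩
    show AdjoinRoot.liftAlgHom f (Algebra.ofId κ B) b hb (AdjoinRoot.mk f (C c + C d * X)) = _
    change aeval b (C c + C d * X) = _
    rw [map_add, map_mul, aeval_C, aeval_C, aeval_X]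

theorem dual_nilpotent (h : IsDualNumberCase κ A) : ∃ n : A, n ≠ 0 ∧ n * n = 0 := by
  obtain ⟨e⟩ := h
  refine ⟨e.symm ε, ?_, ?_⟩
  · intro h0
    have h1 : (ε : DualNumber κ) = 0 := by
      have h2 := congrArg e h0
      rwa [e.apply_symm_apply, map_zero] at h2
    have h3 := congrArg TrivSqZeroExt.snd h1
    simpa using h3
  · apply e.injective
    rw [map_mul, e.apply_symm_apply, DualNumber.eps_mul_eps, map_zero]

theorem prod_reduced (h : IsProdCase κ A) {n : A} (hn : n * n = 0) : n = 0 := by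
  obtain ⟨e⟩ := h
  apply e.injective
  rw [map_zero]
  have h1 : e n * e n = 0 := by rw [← map_mul, hn, map_zero]
  have h2 : (e n).1 * (e n).1 = 0 := by rw [← Prod.fst_mul, h1]; rfl
  have h3 : (e n).2 * (e n).2 = 0 := by rw [← Prod.snd_mul, h1]; rfl
  exact Prod.ext (mul_self_eq_zero.mp h2) (mul_self_eq_zero.mp h3)

theorem prod_zero_divisor (h : IsProdCase κ A) : ∃ u v : A, u ≠ 0 ∧ v ≠ 0 ∧ u * v = 0 := by
  obtain ⟨e⟩ := h
  refine ⟨e.symm (1, 0), e.symm (0, 1), ?_, ?_, ?_⟩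
  · intro h0
    have h1 := congrArg e h0
    rw [e.apply_symm_apply, map_zero, Prod.ext_iff] at h1
    exact one_ne_zero h1.1
  · intro h0
    have h1 := congrArg e h0
    rw [e.apply_symm_apply, map_zero, Prod.ext_iff] at h1
    exact one_ne_zero h1.2
  · apply e.injective
    rw [map_mul, e.apply_symm_apply, e.apply_symm_apply, map_zero, Prod.mk_mul_mk]
    simp

theorem insep_irreducible {p : ℕ} (hp : p.Prime) {a : κ}
    (ha : a ∉ Set.range (fun x : κ => x ^ p)) : Irreducible (X ^ p - C a) :=
  X_pow_sub_C_irreducible_of_prime hp fun b hb => ha ⟨b, hb⟩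

theorem insep_isField (h : IsInsepCase κ A) : IsField A := by
  obtain ⟨p, hp, _, a, ha, ⟨e⟩⟩ := h
  haveI := Fact.mk (insep_irreducible hp ha)
  exact e.toMulEquiv.isField (Field.toIsField _)

theorem insep_not_separable (h : IsInsepCase κ A) : ∃ x : A, ¬(minpoly κ x).Separable := by
  obtain ⟨p, hp, hchar, a, ha, ⟨e⟩⟩ := h
  haveI := hchar
  have hirr := insep_irreducible (κ := κ) hp ha
  haveI := Fact.mk hirr
  refine ⟨e.symm (AdjoinRoot.root _), ?_⟩
  have hm : minpoly κ (e.symm (AdjoinRoot.root (X ^ p - C a))) = X ^ p - C a := by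
    rw [← minpoly.algEquiv_eq e (e.symm (AdjoinRoot.root (X ^ p - C a))), e.apply_symm_apply,
      AdjoinRoot.minpoly_root hirr.ne_zero, (monic_X_pow_sub_C a hp.ne_zero).leadingCoeff,
      inv_one, C_1, mul_one]
  rw [hm]
  intro hsep
  have hder : derivative (X ^ p - C a : κ[X]) = 0 := by
    rw [derivative_sub, derivative_C, derivative_X_pow, sub_zero, CharP.cast_eq_zero κ p, C_0,
      zero_mul]
  rw [Polynomial.Separable, hder] at hsep
  have hu := isCoprime_zero_right.mp hsep
  exact not_isUnit_of_natDegree_pos _ (by rw [natDegree_X_pow_sub_C]; exact hp.pos) hu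

theorem isField_no_zd (h : IsField A) {u v : A} (hu : u ≠ 0) (huv : u * v = 0) : v = 0 := by
  obtain ⟨w, hw⟩ := h.mul_inv_cancel hu
  calc v = w * (u * v) := by rw [← mul_assoc, mul_comm w u, hw, one_mul]
  _ = 0 := by rw [huv, mul_zero]

end PrimeAlgebraAux

variable (κ A)

/-- Classification of prime algebras over an arbitrary field: a `κ`-algebra `A` with
`A ≠ 0`, `κ → A` not surjective, whose only `κ`-subalgebras are `κ` and `A`, is
isomorphic as a `κ`-algebra to **exactly one** of
(i) `κ[ε]/(ε²)`, (ii) `κ × κ`, (iii) `κ(a^{1/p})` with `p = char κ > 0`, `a ∈ κ \ κ^p`,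
(iv) a finite nontrivial separable field extension of `κ` with no proper subextensions. -/
theorem primeAlgebra_classification
    (hnt : Nontrivial A)
    (hns : ¬ Function.Surjective (algebraMap κ A))
    (hsub : ∀ S : Subalgebra κ A, S = ⊥ ∨ S = ⊤) :
    (IsDualNumberCase κ A ∨ IsProdCase κ A ∨ IsInsepCase κ A ∨ IsSepFieldCase κ A) ∧
    ¬ (IsDualNumberCase κ A ∧ IsProdCase κ A) ∧
    ¬ (IsDualNumberCase κ A ∧ IsInsepCase κ A) ∧
    ¬ (IsDualNumberCase κ A ∧ IsSepFieldCase κ A) ∧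
    ¬ (IsProdCase κ A ∧ IsInsepCase κ A) ∧
    ¬ (IsProdCase κ A ∧ IsSepFieldCase κ A) ∧
    ¬ (IsInsepCase κ A ∧ IsSepFieldCase κ A) := by
  classical
  haveI := hnt
  haveI hintA : Algebra.IsIntegral κ A := PrimeAlgebraAux.isIntegral hnt hsub
  obtain ⟨x₀, hx₀⟩ : ∃ x : A, x ∉ (⊥ : Subalgebra κ A) := by
    by_contra h
    push_neg at h
    exact hns fun b => Algebra.mem_bot.mp (h b)
  have hfin : Module.Finite κ A := by
    constructor
    rw [← Algebra.top_toSubmodule, ← PrimeAlgebraAux.adjoin_eq_top hsub hx₀]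
    exact (Algebra.IsIntegral.isIntegral (R := κ) x₀).fg_adjoin_singleton
  have hmain : IsDualNumberCase κ A ∨ IsProdCase κ A ∨ IsInsepCase κ A ∨ IsSepFieldCase κ A := by
    by_cases hred : IsReduced A
    · by_cases hfield : IsField A
      · by_cases hsep : Algebra.IsSeparable κ A
        · exact Or.inr (Or.inr (Or.inr ⟨hfield, hfin, hsep, hns⟩))
        · -- inseparable field case
          refine Or.inr (Or.inr (Or.inl ?_))
          letI : Field A := hfield.toField
          obtain ⟨x, hxsep⟩ : ∃ x : A, ¬(minpoly κ x).Separable := by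
            by_contra h
            push_neg at h
            exact hsep ⟨fun x => h x⟩
          have hxint := Algebra.IsIntegral.isIntegral (R := κ) x
          have hxb : x ∉ (⊥ : Subalgebra κ A) := by
            intro hmem
            obtain ⟨c, rfl⟩ := Algebra.mem_bot.mp hmem
            exact hxsep (by rw [minpoly.eq_X_sub_C]; exact separable_X_sub_C)
          have hirr := minpoly.irreducible hxint
          set p := ringChar κ with hpdef
          haveI hcp : CharP κ p := ringChar.charP κ
          have hp0 : p ≠ 0 := by
            intro h0
            haveI : CharP κ 0 := h0 ▸ hcp
            haveI : CharZero κ := CharP.charP_to_charZero κ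
            exact hxsep hirr.separable
          have hp : p.Prime := (CharP.char_is_prime_or_zero κ p).resolve_right hp0
          rcases Polynomial.separable_or p hirr with hsep' | ⟨-, g, hgirr, hgexp⟩
          · exact absurd hsep' hxsep
          rcases hsub (Algebra.adjoin κ {x ^ p}) with hS | hS
          · have hxp : x ^ p ∈ (⊥ : Subalgebra κ A) := by
              rw [← hS]; exact Algebra.subset_adjoin (Set.mem_singleton _)
            obtain ⟨a, ha⟩ := Algebra.mem_bot.mp hxp
            haveI := Fact.mk hp
            haveI : CharP A p := charP_of_injective_algebraMap (algebraMap κ A).injective p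
            have hnp : a ∉ Set.range fun b : κ => b ^ p := by
              rintro ⟨b, hb⟩
              have hb' : b ^ p = a := hb
              have h1 : (x - algebraMap κ A b) ^ p = 0 := by
                rw [sub_pow_char, ← map_pow, hb', ha, sub_self]
              have h2 : x - algebraMap κ A b = 0 := (pow_eq_zero_iff hp.ne_zero).mp h1
              exact hxb (Algebra.mem_bot.mpr ⟨b, (sub_eq_zero.mp h2).symm⟩)
            have hmin : minpoly κ x = X ^ p - C a :=
              (minpoly.eq_of_irreducible_of_monic (PrimeAlgebraAux.insep_irreducible hp hnp)
                (by rw [map_sub, aeval_X_pow, aeval_C, ha, sub_self])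
                (monic_X_pow_sub_C a hp.ne_zero)).symm
            exact ⟨p, hp, hcp, a, hnp,
              hmin ▸ PrimeAlgebraAux.equiv_adjoinRoot hxint
                (PrimeAlgebraAux.adjoin_eq_top hsub hxb)⟩
          · exfalso
            have hfin1 : Module.finrank κ A = (minpoly κ x).natDegree :=
              PrimeAlgebraAux.finrank_eq hxint (PrimeAlgebraAux.adjoin_eq_top hsub hxb)
            have hfin2 : Module.finrank κ A = (minpoly κ (x ^ p)).natDegree :=
              PrimeAlgebraAux.finrank_eq (Algebra.IsIntegral.isIntegral _) hS
            have hdvd : minpoly κ (x ^ p) ∣ g :=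
              minpoly.dvd κ _ (by rw [← expand_aeval, hgexp]; exact minpoly.aeval κ x)
            have hgle : (minpoly κ (x ^ p)).natDegree ≤ g.natDegree :=
              natDegree_le_of_dvd hdvd hgirr.ne_zero
            have hgdeg : (minpoly κ x).natDegree = g.natDegree * p := by
              rw [← hgexp, natDegree_expand]
            have hgpos := hgirr.natDegree_pos
            have hp2 := hp.two_le
            have hmul : g.natDegree * 2 ≤ g.natDegree * p := Nat.mul_le_mul_left _ hp2
            rw [hgdeg] at hfin1
            omega
      · -- reduced, not a field → IsProdCase
        refine Or.inr (Or.inl ?_)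
        obtain ⟨x, hx0, hxu⟩ : ∃ x : A, x ≠ 0 ∧ ¬IsUnit x := by
          by_contra h
          push_neg at h
          exact hfield ⟨exists_pair_ne A, mul_comm, fun {a} ha => (h a ha).exists_right_inv⟩
        have hxb : x ∉ (⊥ : Subalgebra κ A) := fun hmem =>
          hxu (PrimeAlgebraAux.unit_of_mem_bot hmem hx0)
        have hxint := Algebra.IsIntegral.isIntegral (R := κ) x
        have hfm := minpoly.monic hxint
        have hf0 := hfm.ne_zero
        have h2le := PrimeAlgebraAux.two_le_minpoly hxint hxb
        have hnotirr : ¬Irreducible (minpoly κ x) := by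
          intro hirr
          have hc0 : (minpoly κ x).coeff 0 ≠ 0 := by
            intro h0
            obtain ⟨c, hc⟩ := X_dvd_iff.mpr h0
            rcases hirr.isUnit_or_isUnit hc with h | h
            · exact not_isUnit_of_natDegree_pos X (by rw [natDegree_X]; omega) h
            · have hcd : c.natDegree = 0 := natDegree_eq_zero_of_isUnit h
              have hX0 : (X : κ[X]) ≠ 0 := X_ne_zero
              have hcne : c ≠ 0 := fun h0' => hf0 (by rw [hc, h0', mul_zero])
              have : (minpoly κ x).natDegree = 1 := by
                rw [hc, natDegree_mul hX0 hcne, natDegree_X, hcd]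
              omega
          have h1 : aeval x (X * (minpoly κ x).divX + C ((minpoly κ x).coeff 0)) = 0 := by
            rw [X_mul_divX_add]; exact minpoly.aeval κ x
          rw [map_add, map_mul, aeval_X, aeval_C] at h1
          refine hxu (IsUnit.of_mul_eq_one (a := x)
            (aeval x ((minpoly κ x).divX) * algebraMap κ A (-((minpoly κ x).coeff 0)⁻¹)) ?_)
          have hxw : x * aeval x ((minpoly κ x).divX) =
              -algebraMap κ A ((minpoly κ x).coeff 0) := eq_neg_of_add_eq_zero_left h1
          rw [← mul_assoc, hxw, map_neg, neg_mul_neg, ← map_mul,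
            mul_inv_cancel₀ hc0, map_one]
        obtain ⟨a, b, hab, hau, hbu⟩ :
            ∃ a b : κ[X], minpoly κ x = a * b ∧ ¬IsUnit a ∧ ¬IsUnit b := by
          rw [irreducible_iff] at hnotirr
          push_neg at hnotirr
          exact hnotirr (not_isUnit_of_natDegree_pos _ (by omega))
        have ha0 : a ≠ 0 := fun h => hf0 (by rw [hab, h, zero_mul])
        have hb0 : b ≠ 0 := fun h => hf0 (by rw [hab, h, mul_zero])
        have hdeg_pos : ∀ c : κ[X], c ≠ 0 → ¬IsUnit c → 0 < c.natDegree := by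
          intro c hc0 hcu
          by_contra h
          push_neg at h
          obtain ⟨u, hu⟩ := natDegree_eq_zero.mp (Nat.le_zero.mp h)
          have hu0 : u ≠ 0 := fun h0 => hc0 (by rw [← hu, h0, C_0])
          exact hcu (hu ▸ isUnit_C.mpr (isUnit_iff_ne_zero.mpr hu0))
        have hadeg := hdeg_pos a ha0 hau
        have hbdeg := hdeg_pos b hb0 hbu
        have hsum : a.natDegree + b.natDegree = (minpoly κ x).natDegree := by
          rw [hab, natDegree_mul ha0 hb0]
        have hax : aeval x a ≠ 0 := by
          intro h
          have h2 := natDegree_le_natDegree (minpoly.degree_le_of_ne_zero κ x ha0 h)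
          omega
        have hbx : aeval x b ≠ 0 := by
          intro h
          have h2 := natDegree_le_natDegree (minpoly.degree_le_of_ne_zero κ x hb0 h)
          omega
        have habx : aeval x a * aeval x b = 0 := by rw [← map_mul, ← hab, minpoly.aeval]
        by_cases hcop : IsCoprime a b
        · obtain ⟨u, v, huv⟩ := hcop
          set e := aeval x (v * b) with hedef
          have hcompl : aeval x (u * a) + e = 1 := by
            rw [hedef, ← map_add, huv, map_one]
          have h1 : e * aeval x (u * a) = 0 := by
            rw [hedef, ← map_mul]
            have hvb : v * b * (u * a) = v * u * minpoly κ x := by rw [hab]; ring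
            rw [hvb, map_mul, minpoly.aeval, mul_zero]
          have hee : e * e = e := by
            calc e * e = e * (aeval x (u * a) + e) - e * aeval x (u * a) := by ring
            _ = e := by rw [hcompl, h1, mul_one, sub_zero]
          have he0 : e ≠ 0 := by
            intro h0
            have h2 : aeval x (u * a) = 1 := by rw [← hcompl, h0, add_zero]
            rw [map_mul] at h2
            have h3 : aeval x b = 0 := by
              calc aeval x b = aeval x u * (aeval x a * aeval x b) := by
                    rw [← mul_assoc, h2, one_mul]
              _ = 0 := by rw [habx, mul_zero]
            exact hbx h3
          have he1 : e ≠ 1 := by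
            intro h0
            have h2 : aeval x v * aeval x b = 1 := by rw [← map_mul, ← hedef, h0]
            have h3 : aeval x a = 0 := by
              calc aeval x a = aeval x v * (aeval x a * aeval x b) := by
                    rw [mul_comm (aeval x a) (aeval x b), ← mul_assoc, h2, one_mul]
              _ = 0 := by rw [habx, mul_zero]
            exact hax h3
          have heb : e ∉ (⊥ : Subalgebra κ A) := by
            intro hmem
            obtain ⟨c, hc⟩ := Algebra.mem_bot.mp hmem
            have hcc : algebraMap κ A (c * c) = algebraMap κ A c := by rw [map_mul, hc, hee]
            have hcc2 : c * c = c := (algebraMap κ A).injective hcc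
            have hcases : c = 0 ∨ c = 1 := by
              have hfac : c * (c - 1) = 0 := by rw [mul_sub, hcc2, mul_one, sub_self]
              rcases mul_eq_zero.mp hfac with h | h
              · exact Or.inl h
              · exact Or.inr (sub_eq_zero.mp h)
            rcases hcases with rfl | rfl
            · exact he0 (by rw [← hc, map_zero])
            · exact he1 (by rw [← hc, map_one])
          have heint := Algebra.IsIntegral.isIntegral (R := κ) e
          have hm2 : ((X : κ[X]) ^ 2 - X).Monic := by
            exact monic_X_pow_sub (p := (X : κ[X])) (n := 2) (by rw [degree_X]; decide)
          have hndeg2 : ((X : κ[X]) ^ 2 - X).natDegree = 2 := by compute_degree!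
          have hmdvd : minpoly κ e ∣ X ^ 2 - X :=
            minpoly.dvd κ _ (by rw [map_sub, aeval_X_pow, aeval_X, pow_two, hee, sub_self])
          have hminE : minpoly κ e = X ^ 2 - X :=
            PrimeAlgebraAux.monic_dvd_eq (minpoly.monic heint) hm2 hmdvd
              (by rw [hndeg2]; exact PrimeAlgebraAux.two_le_minpoly heint heb)
          obtain ⟨e₁⟩ := PrimeAlgebraAux.equiv_adjoinRoot heint
            (PrimeAlgebraAux.adjoin_eq_top hsub heb)
          rw [hminE] at e₁
          have hbval : aeval ((0 : κ), (1 : κ)) ((X : κ[X]) ^ 2 - X) = 0 := by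
            rw [map_sub, aeval_X_pow, aeval_X, pow_two, Prod.mk_mul_mk]
            simp
          obtain ⟨e₂⟩ := PrimeAlgebraAux.quad_equiv hm2 hndeg2 ((0 : κ), (1 : κ)) hbval
            (fun z => ⟨z.1, z.2 - z.1, by
              rw [Prod.algebraMap_apply, Prod.algebraMap_apply]
              ext
              · simp
              · simp⟩)
            (fun c d h => by
              rw [Prod.algebraMap_apply, Prod.algebraMap_apply, Prod.mk_mul_mk] at h
              have h1 := congrArg Prod.fst h
              have h2 := congrArg Prod.snd h
              simp at h1 h2
              refine ⟨h1, ?_⟩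
              rwa [h1, zero_add] at h2)
          exact ⟨e₁.trans e₂⟩
        · exfalso
          have hgcd : ¬IsUnit (EuclideanDomain.gcd a b) := fun h =>
            hcop (EuclideanDomain.gcd_isUnit_iff.mp h)
          set d := EuclideanDomain.gcd a b with hddef
          have hda : d ∣ a := EuclideanDomain.gcd_dvd_left a b
          have hdb : d ∣ b := EuclideanDomain.gcd_dvd_right a b
          have hd0 : d ≠ 0 := fun h =>
            ha0 (by rw [← zero_dvd_iff, ← h]; exact hda)
          obtain ⟨a', ha'⟩ := hda
          obtain ⟨b', hb'⟩ := hdb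
          have hddeg := hdeg_pos d hd0 hgcd
          have hk0 : d * (a' * b') ≠ 0 := by
            intro h
            apply hf0
            rw [hab, ha', hb']
            calc d * a' * (d * b') = d * (d * (a' * b')) := by ring
            _ = 0 := by rw [h, mul_zero]
          have hkaev : aeval x (d * (a' * b')) ≠ 0 := by
            intro h
            have h2 := natDegree_le_natDegree
              (minpoly.degree_le_of_ne_zero κ x hk0 h)
            have h3 : (minpoly κ x).natDegree = d.natDegree + (d * (a' * b')).natDegree := by
              have : minpoly κ x = d * (d * (a' * b')) := by rw [hab, ha', hb']; ring
              rw [this, natDegree_mul hd0 hk0]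
            omega
          have hsq : aeval x (d * (a' * b')) * aeval x (d * (a' * b')) = 0 := by
            rw [← map_mul]
            have : d * (a' * b') * (d * (a' * b')) = minpoly κ x * (a' * b') := by
              rw [hab, ha', hb']; ring
            rw [this, map_mul, minpoly.aeval, zero_mul]
          have hnil : IsNilpotent (aeval x (d * (a' * b'))) := ⟨2, by rw [pow_two, hsq]⟩
          exact hkaev (hred.eq_zero _ hnil)
    · -- not reduced → IsDualNumberCase
      refine Or.inl ?_
      obtain ⟨n, hnil, hn0⟩ : ∃ n : A, IsNilpotent n ∧ n ≠ 0 := by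
        by_contra h
        push_neg at h
        exact hred ⟨fun {x} hx => h x hx⟩
      have hnb : n ∉ (⊥ : Subalgebra κ A) := PrimeAlgebraAux.nilpotent_not_mem_bot hnil hn0
      have hsq : n * n = 0 := by
        by_contra hn2
        have hnn : IsNilpotent (n * n) := (Commute.all n n).isNilpotent_mul_left hnil
        have hnnb : n * n ∉ (⊥ : Subalgebra κ A) := PrimeAlgebraAux.nilpotent_not_mem_bot hnn hn2
        have htop := PrimeAlgebraAux.adjoin_eq_top hsub hnnb
        have hxmem : n ∈ Algebra.adjoin κ {n * n} := htop ▸ Algebra.mem_top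
        rw [Algebra.adjoin_singleton_eq_range_aeval] at hxmem
        obtain ⟨q, hq⟩ := hxmem
        have hq' : aeval (n * n) q = n := hq
        have hrep : n * n * aeval (n * n) q.divX + algebraMap κ A (q.coeff 0) = n := by
          have h1 : aeval (n * n) (X * q.divX + C (q.coeff 0)) = n := by
            rw [X_mul_divX_add, hq']
          rwa [map_add, map_mul, aeval_X, aeval_C] at h1
        have hc0 : q.coeff 0 = 0 := by
          have h1 : IsNilpotent (algebraMap κ A (q.coeff 0)) := by
            have h2 : algebraMap κ A (q.coeff 0) = n - n * n * aeval (n * n) q.divX := by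
              linear_combination hrep
            rw [h2]
            exact (Commute.all _ _).isNilpotent_sub hnil
              ((Commute.all _ _).isNilpotent_mul_right hnn)
          obtain ⟨k, hk⟩ := h1
          rw [← map_pow] at hk
          have h3 : q.coeff 0 ^ k = 0 := (algebraMap κ A).injective (by rw [hk, map_zero])
          by_contra h4
          exact pow_ne_zero k h4 h3
        have hn_eq : n = n * n * aeval (n * n) q.divX := by
          rw [hc0, map_zero, add_zero] at hrep
          exact hrep.symm
        have h2 : n * (1 - n * aeval (n * n) q.divX) = 0 := by
          calc n * (1 - n * aeval (n * n) q.divX) = n - n * n * aeval (n * n) q.divX := by ring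
          _ = 0 := by rw [← hn_eq, sub_self]
        have hu : IsUnit (1 - n * aeval (n * n) q.divX) :=
          IsNilpotent.isUnit_one_sub ((Commute.all _ _).isNilpotent_mul_right hnil)
        exact hn0 (hu.mul_right_cancel (by rw [h2, zero_mul]))
      have hnint := Algebra.IsIntegral.isIntegral (R := κ) n
      have hm2 : ((X : κ[X]) ^ 2).Monic := monic_X_pow 2
      have hd2 : ((X : κ[X]) ^ 2).natDegree = 2 := natDegree_X_pow 2
      have hdvd : minpoly κ n ∣ X ^ 2 :=
        minpoly.dvd κ _ (by rw [aeval_X_pow, pow_two, hsq])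
      have hminN : minpoly κ n = X ^ 2 :=
        PrimeAlgebraAux.monic_dvd_eq (minpoly.monic hnint) hm2 hdvd
          (by rw [hd2]; exact PrimeAlgebraAux.two_le_minpoly hnint hnb)
      obtain ⟨e₁⟩ := PrimeAlgebraAux.equiv_adjoinRoot hnint
        (PrimeAlgebraAux.adjoin_eq_top hsub hnb)
      rw [hminN] at e₁
      have hbval : aeval (ε : DualNumber κ) ((X : κ[X]) ^ 2) = 0 := by
        rw [aeval_X_pow, pow_two, DualNumber.eps_mul_eps]
      have hmap : ∀ c : κ, algebraMap κ (DualNumber κ) c = TrivSqZeroExt.inl c := fun c =>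
        congrFun (TrivSqZeroExt.algebraMap_eq_inl κ κ) c
      have key : ∀ c d : κ, algebraMap κ (DualNumber κ) c + algebraMap κ (DualNumber κ) d * ε
          = TrivSqZeroExt.inl c + TrivSqZeroExt.inr d := by
        intro c d
        rw [hmap, hmap]
        have h2 : (ε : DualNumber κ) = TrivSqZeroExt.inr 1 := rfl
        rw [h2, TrivSqZeroExt.inl_mul_inr, smul_eq_mul, mul_one]
      obtain ⟨e₂⟩ := PrimeAlgebraAux.quad_equiv hm2 hd2 (ε : DualNumber κ) hbval
        (fun z => ⟨TrivSqZeroExt.fst z, TrivSqZeroExt.snd z, by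
          rw [key]
          exact (TrivSqZeroExt.inl_fst_add_inr_snd_eq z).symm⟩)
        (fun c d h => by
          rw [key c d] at h
          have h1 := congrArg TrivSqZeroExt.fst h
          have h2 := congrArg TrivSqZeroExt.snd h
          rw [TrivSqZeroExt.fst_add, TrivSqZeroExt.fst_inl, TrivSqZeroExt.fst_inr,
            TrivSqZeroExt.fst_zero, add_zero] at h1
          rw [TrivSqZeroExt.snd_add, TrivSqZeroExt.snd_inl, TrivSqZeroExt.snd_inr,
            TrivSqZeroExt.snd_zero, zero_add] at h2
          exact ⟨h1, h2⟩)
      exact ⟨e₁.trans e₂⟩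
  refine ⟨hmain, ?_, ?_, ?_, ?_, ?_, ?_⟩
  · rintro ⟨hd, hp⟩
    obtain ⟨n, hn0, hnn⟩ := PrimeAlgebraAux.dual_nilpotent hd
    exact hn0 (PrimeAlgebraAux.prod_reduced hp hnn)
  · rintro ⟨hd, hi⟩
    obtain ⟨n, hn0, hnn⟩ := PrimeAlgebraAux.dual_nilpotent hd
    exact hn0 (PrimeAlgebraAux.isField_no_zd (PrimeAlgebraAux.insep_isField hi) hn0 hnn)
  · rintro ⟨hd, hs⟩
    obtain ⟨n, hn0, hnn⟩ := PrimeAlgebraAux.dual_nilpotent hd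
    exact hn0 (PrimeAlgebraAux.isField_no_zd hs.1 hn0 hnn)
  · rintro ⟨hp, hi⟩
    obtain ⟨u, v, hu, hv, huv⟩ := PrimeAlgebraAux.prod_zero_divisor hp
    exact hv (PrimeAlgebraAux.isField_no_zd (PrimeAlgebraAux.insep_isField hi) hu huv)
  · rintro ⟨hp, hs⟩
    obtain ⟨u, v, hu, hv, huv⟩ := PrimeAlgebraAux.prod_zero_divisor hp
    exact hv (PrimeAlgebraAux.isField_no_zd hs.1 hu huv)
  · rintro ⟨hi, hs⟩
    obtain ⟨x, hx⟩ := PrimeAlgebraAux.insep_not_separable hi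
    haveI := hs.2.2.1
    exact hx (Algebra.IsSeparable.isSeparable κ x)

end PrimeAlgebraClassification
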